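/- Let β̂ be the unique minimizer of L_λ for λ > 0. Then for any i ≠ j: β̂_i = β̂_j if and only if d_i = d_j. Moreover, d_i > d_j implies β̂_i > β̂_j. -/
import Mathlib


open Finset

noncomputable def betaBar {n : ℕ} (β : Fin n → ℝ) : ℝ := (n : ℝ)⁻¹ * ∑ i, β i

noncomputable def gradPen {n : ℕ} (d : Fin n → ℝ) (lam : ℝ) (β : Fin n → ℝ) (i : Fin n) : ℝ :=
  (∑ j ∈ Finset.univ.erase i, Real.exp (β i + β j) / (1 + Real.exp (β i + β j)))
    - d i + lam * (β i - betaBar β)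

noncomputable def lgf (x : ℝ) : ℝ := Real.exp x / (1 + Real.exp x)

lemma lgf_def (x : ℝ) : Real.exp x / (1 + Real.exp x) = lgf x := rfl

lemma lgf_strictMono : StrictMono lgf := by
  intro a b hab
  unfold lgf
  have ha := Real.exp_pos a
  have hb := Real.exp_pos b
  rw [div_lt_div_iff₀ (by linarith) (by linarith)]
  have := Real.exp_lt_exp.mpr hab
  nlinarith

lemma key_diff (n : ℕ) (d : Fin n → ℝ) (lam : ℝ) (β : Fin n → ℝ)
    (hfoc : ∀ i, gradPen d lam β i = 0) (i j : Fin n) (hij : i ≠ j) :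
    d i - d j = (∑ k ∈ (Finset.univ.erase i).erase j,
        (lgf (β i + β k) - lgf (β j + β k))) + lam * (β i - β j) := by
  have hi := hfoc i
  have hj := hfoc j
  unfold gradPen at hi hj
  simp only [lgf_def] at hi hj
  have hji : j ∈ Finset.univ.erase i := by simp [hij.symm]
  have hij' : i ∈ Finset.univ.erase j := by simp [hij]
  rw [← Finset.add_sum_erase _ _ hji] at hi
  rw [← Finset.add_sum_erase _ _ hij'] at hj
  rw [Finset.erase_right_comm] at hj
  rw [Finset.sum_sub_distrib]
  have hsym : lgf (β j + β i) = lgf (β i + β j) := by rw [add_comm]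
  rw [hsym] at hj
  linarith

lemma beta_lt_d_lt (n : ℕ) (d : Fin n → ℝ) (lam : ℝ) (hlam : 0 < lam) (β : Fin n → ℝ)
    (hfoc : ∀ i, gradPen d lam β i = 0) (i j : Fin n) (hij : i ≠ j)
    (hβ : β j < β i) : d j < d i := by
  have h := key_diff n d lam β hfoc i j hij
  have hsum : 0 ≤ ∑ k ∈ (Finset.univ.erase i).erase j, (lgf (β i + β k) - lgf (β j + β k)) := by
    apply Finset.sum_nonneg
    intro k _
    have : lgf (β j + β k) < lgf (β i + β k) := lgf_strictMono (by linarith)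
    linarith
  nlinarith

lemma beta_eq_d_eq (n : ℕ) (d : Fin n → ℝ) (lam : ℝ) (β : Fin n → ℝ)
    (hfoc : ∀ i, gradPen d lam β i = 0) (i j : Fin n) (hij : i ≠ j)
    (hβ : β i = β j) : d i = d j := by
  have h := key_diff n d lam β hfoc i j hij
  rw [hβ] at h
  simp at h
  linarith

theorem mle_degree_monotonicity (n : ℕ) (hn : 2 ≤ n) (d : Fin n → ℝ) (lam : ℝ) (hlam : 0 < lam)
    (βhat : Fin n → ℝ) (hfoc : ∀ i, gradPen d lam βhat i = 0) :
    (∀ i j : Fin n, i ≠ j → (βhat i = βhat j ↔ d i = d j)) ∧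
      (∀ i j : Fin n, i ≠ j → d j < d i → βhat j < βhat i) := by
  have hmono := beta_lt_d_lt n d lam hlam βhat hfoc
  have heq := beta_eq_d_eq n d lam βhat hfoc
  constructor
  · intro i j hij
    constructor
    · exact heq i j hij
    · intro hd
      rcases lt_trichotomy (βhat i) (βhat j) with h | h | h
      · exact absurd (hmono j i hij.symm h) (by rw [hd]; exact lt_irrefl _)
      · exact h
      · exact absurd (hmono i j hij h) (by rw [hd]; exact lt_irrefl _)
  · intro i j hij hd
    rcases lt_trichotomy (βhat j) (βhat i) with h | h | h
    · exact h
    · exact absurd (heq j i hij.symm h) (ne_of_lt hd)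
    · exact absurd (hmono j i hij.symm h) (not_lt.mpr (le_of_lt hd))
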